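/- arXiv:1611.09513 — 4 statements merged into one kernel-verified Lean document; each statement's English description precedes it below -/
import Mathlib

section
/- For every real number t and every vector x = (x₁,x₂,x₃) ∈ ℝ³, the real symmetric 3×3 matrix Φ_t(xxᵀ), whose (1,1), (2,2), (3,3) entries are (t²−1)²x₁²+x₂²+t⁴x₃², (t²−1)²x₂²+x₃²+t⁴x₁², (t²−1)²x₃²+x₁²+t⁴x₂² respectively, and whose (i,j) entry for i ≠ j is −(t⁴−t²+1)xᵢxⱼ, is positive semidefinite. -/
set_option maxHeartbeats 1000000


/-- auxiliary polynomial -/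
def HH (X Y Z s : ℝ) : ℝ :=
  (1-2*s^3)*(X^2*Z+X*Y^2+Y*Z^2-3*X*Y*Z) + s*(s^3-2)*(X^2*Y+Y^2*Z+Z^2*X-3*X*Y*Z)
    + s^2*(X^3+Y^3+Z^3-3*X*Y*Z)

lemma Hord1 (A B C s : ℝ) (hs : 0 ≤ s) (hC : 0 ≤ C) (h1 : C ≤ B) (h2 : B ≤ A) :
    0 ≤ HH A B C s := by
  have e1 : 0 ≤ (s^2-s+1)^2 * C * ((A-B)^2 + (A-B)*(B-C) + (B-C)^2) := by
    apply mul_nonneg (mul_nonneg (sq_nonneg _) hC)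
    nlinarith [sq_nonneg (A-B), sq_nonneg (B-C), sq_nonneg (A-C)]
  have e2 : 0 ≤ (s*(A-B) - (1-s)*(B-C))^2 * ((A-B) + (s^2+1)*(B-C)) := by
    apply mul_nonneg (sq_nonneg _)
    nlinarith [sq_nonneg s, mul_nonneg (sq_nonneg s) (sub_nonneg.2 h1)]
  have key : HH A B C s = (s^2-s+1)^2 * C * ((A-B)^2 + (A-B)*(B-C) + (B-C)^2)
      + (s*(A-B) - (1-s)*(B-C))^2 * ((A-B) + (s^2+1)*(B-C)) := by
    unfold HH; ring
  rw [key]; exact add_nonneg e1 e2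

lemma Hord2 (A B C s : ℝ) (hs : 0 ≤ s) (hB : 0 ≤ B) (h1 : B ≤ C) (h2 : C ≤ A) :
    0 ≤ HH A B C s := by
  have e1 : 0 ≤ (s^2-s+1)^2 * B * ((A-C)^2 + (A-C)*(C-B) + (C-B)^2) := by
    apply mul_nonneg (mul_nonneg (sq_nonneg _) hB)
    nlinarith [sq_nonneg (A-C), sq_nonneg (C-B), sq_nonneg (A-B)]
  have e2 : 0 ≤ ((A-C) - (s-1)*(C-B))^2 * (s^2*(A-C) + (s^2+1)*(C-B)) := by
    apply mul_nonneg (sq_nonneg _)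
    nlinarith [mul_nonneg (sq_nonneg s) (sub_nonneg.2 h2), mul_nonneg (sq_nonneg s) (sub_nonneg.2 h1)]
  have key : HH A B C s = (s^2-s+1)^2 * B * ((A-C)^2 + (A-C)*(C-B) + (C-B)^2)
      + ((A-C) - (s-1)*(C-B))^2 * (s^2*(A-C) + (s^2+1)*(C-B)) := by
    unfold HH; ring
  rw [key]; exact add_nonneg e1 e2

lemma Hnn (X Y Z s : ℝ) (hX : 0 ≤ X) (hY : 0 ≤ Y) (hZ : 0 ≤ Z) (hs : 0 ≤ s) :
    0 ≤ HH X Y Z s := by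
  have c1 : HH X Y Z s = HH Y Z X s := by unfold HH; ring
  have c2 : HH X Y Z s = HH Z X Y s := by unfold HH; ring
  rcases le_total X Y with hxy | hxy <;> rcases le_total Y Z with hyz | hyz <;>
    rcases le_total Z X with hzx | hzx
  · rw [c2]; exact Hord2 Z X Y s hs hX hxy hyz
  · rw [c2]; exact Hord2 Z X Y s hs hX hxy hyz
  · rw [c1]; exact Hord2 Y Z X s hs hZ hzx hxy
  · rw [c1]; exact Hord1 Y Z X s hs hX hzx hyz
  · exact Hord2 X Y Z s hs hY hyz hzx
  · rw [c2]; exact Hord1 Z X Y s hs hY hxy hzx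
  · exact Hord1 X Y Z s hs hZ hyz hxy
  · exact Hord1 X Y Z s hs hZ hyz hxy


lemma core (g1 g2 g3 k x1 x2 x3 v1 v2 v3 : ℝ)
    (hg1 : 0 ≤ g1) (hg2 : 0 ≤ g2) (hg3 : 0 ≤ g3) (hk : 0 ≤ k)
    (hF : k*(x1^2*(g2*g3) + x2^2*(g1*g3) + x3^2*(g1*g2)) ≤ g1*g2*g3)
    (hG : 0 < g1*g2*g3) :
    k*(x1*v1+x2*v2+x3*v3)^2 ≤ g1*v1^2+g2*v2^2+g3*v3^2 := by
  have hS : 0 ≤ g1*v1^2+g2*v2^2+g3*v3^2 :=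
    add_nonneg (add_nonneg (mul_nonneg hg1 (sq_nonneg v1)) (mul_nonneg hg2 (sq_nonneg v2)))
      (mul_nonneg hg3 (sq_nonneg v3))
  have hCS : g1*g2*g3*(x1*v1+x2*v2+x3*v3)^2
      ≤ (g1*v1^2+g2*v2^2+g3*v3^2)*(x1^2*(g2*g3)+x2^2*(g1*g3)+x3^2*(g1*g2)) := by
    nlinarith [mul_nonneg hg3 (sq_nonneg (g1*x2*v1-g2*x1*v2)),
      mul_nonneg hg2 (sq_nonneg (g1*x3*v1-g3*x1*v3)),
      mul_nonneg hg1 (sq_nonneg (g2*x3*v2-g3*x2*v3))]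
  have h4 := mul_le_mul_of_nonneg_left hCS hk
  have h5 := mul_le_mul_of_nonneg_left hF hS
  nlinarith [h4, h5, hG, hS]

lemma Qnn (s x1 x2 x3 v1 v2 v3 : ℝ) (hs : 0 ≤ s) :
    0 ≤ ((s-1)^2*x1^2 + x2^2 + s^2*x3^2)*v1^2
      + ((s-1)^2*x2^2 + x3^2 + s^2*x1^2)*v2^2
      + ((s-1)^2*x3^2 + x1^2 + s^2*x2^2)*v3^2
      - 2*(s^2-s+1)*(x1*x2*v1*v2 + x1*x3*v1*v3 + x2*x3*v2*v3) := by
  have hg1 : 0 ≤ (2*s^2-3*s+2)*x1^2 + x2^2 + s^2*x3^2 := by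
    nlinarith [sq_nonneg ((4*s-3)*x1), sq_nonneg x1, sq_nonneg x2, mul_nonneg (mul_nonneg hs hs) (sq_nonneg x3)]
  have hg2 : 0 ≤ (2*s^2-3*s+2)*x2^2 + x3^2 + s^2*x1^2 := by
    nlinarith [sq_nonneg ((4*s-3)*x2), sq_nonneg x2, sq_nonneg x3, mul_nonneg (mul_nonneg hs hs) (sq_nonneg x1)]
  have hg3 : 0 ≤ (2*s^2-3*s+2)*x3^2 + x1^2 + s^2*x2^2 := by
    nlinarith [sq_nonneg ((4*s-3)*x3), sq_nonneg x3, sq_nonneg x1, mul_nonneg (mul_nonneg hs hs) (sq_nonneg x2)]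
  have hk : 0 ≤ s^2-s+1 := by nlinarith [sq_nonneg (2*s-1)]
  by_cases hG : 0 < ((2*s^2-3*s+2)*x1^2 + x2^2 + s^2*x3^2) *
      ((2*s^2-3*s+2)*x2^2 + x3^2 + s^2*x1^2) * ((2*s^2-3*s+2)*x3^2 + x1^2 + s^2*x2^2)
  · have hH := Hnn (x1^2) (x2^2) (x3^2) s (sq_nonneg _) (sq_nonneg _) (sq_nonneg _) hs
    have hHe : 0 ≤ (1-s)^2 * HH (x1^2) (x2^2) (x3^2) s := mul_nonneg (sq_nonneg _) hH
    have heq : ((2*s^2-3*s+2)*x1^2 + x2^2 + s^2*x3^2) * ((2*s^2-3*s+2)*x2^2 + x3^2 + s^2*x1^2) * ((2*s^2-3*s+2)*x3^2 + x1^2 + s^2*x2^2) - (s^2-s+1)*(x1^2*(((2*s^2-3*s+2)*x2^2 + x3^2 + s^2*x1^2)*((2*s^2-3*s+2)*x3^2 + x1^2 + s^2*x2^2)) + x2^2*(((2*s^2-3*s+2)*x1^2 + x2^2 + s^2*x3^2)*((2*s^2-3*s+2)*x3^2 + x1^2 + s^2*x2^2)) + x3^2*(((2*s^2-3*s+2)*x1^2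 + x2^2 + s^2*x3^2)*((2*s^2-3*s+2)*x2^2 + x3^2 + s^2*x1^2))) = (1-s)^2 * HH (x1^2) (x2^2) (x3^2) s := by unfold HH; ring
    have hF : (s^2-s+1)*(x1^2*(((2*s^2-3*s+2)*x2^2 + x3^2 + s^2*x1^2)*((2*s^2-3*s+2)*x3^2 + x1^2 + s^2*x2^2)) + x2^2*(((2*s^2-3*s+2)*x1^2 + x2^2 + s^2*x3^2)*((2*s^2-3*s+2)*x3^2 + x1^2 + s^2*x2^2)) + x3^2*(((2*s^2-3*s+2)*x1^2 + x2^2 + s^2*x3^2)*((2*s^2-3*s+2)*x2^2 + x3^2 + s^2*x1^2))) ≤ ((2*s^2-3*s+2)*x1^2 + x2^2 + s^2*x3^2) * ((2*s^2-3*s+2)*x2^2 + x3^2 + s^2*x1^2) * ((2*s^2-3*s+2)*x3^2 + x1^2 + s^2*x2^2) := by linarith [hHe, heq]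
    have := core _ _ _ _ x1 x2 x3 v1 v2 v3 hg1 hg2 hg3 hk hF hG
    linarith [this]
  · have hG0 : ((2*s^2-3*s+2)*x1^2 + x2^2 + s^2*x3^2) * ((2*s^2-3*s+2)*x2^2 + x3^2 + s^2*x1^2) * ((2*s^2-3*s+2)*x3^2 + x1^2 + s^2*x2^2) = 0 :=
      le_antisymm (le_of_not_gt hG) (mul_nonneg (mul_nonneg hg1 hg2) hg3)
    have sqz : ∀ y : ℝ, y^2 ≤ 0 → y = 0 := by
      intro y hy
      have : y^2 = 0 := le_antisymm hy (sq_nonneg y)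
      exact (pow_eq_zero_iff two_ne_zero).mp this
    rcases mul_eq_zero.mp hG0 with h | h
    · rcases mul_eq_zero.mp h with h | h
      · have hx1 : x1 = 0 := sqz x1 (by linarith only [h, sq_nonneg ((4*s-3)*x1), sq_nonneg x2, mul_nonneg (mul_nonneg hs hs) (sq_nonneg x3)])
        have hx2 : x2 = 0 := sqz x2 (by linarith only [h, sq_nonneg ((4*s-3)*x1), sq_nonneg x1, mul_nonneg (mul_nonneg hs hs) (sq_nonneg x3)])
        rw [hx1, hx2]
        linarith only [mul_nonneg (mul_nonneg (mul_nonneg hs hs) (sq_nonneg x3)) (sq_nonneg v1), mul_nonneg (sq_nonneg x3) (sq_nonneg v2), mul_nonneg (mul_nonneg (sq_nonneg (s-1)) (sq_nonneg x3)) (sq_nonneg v3)]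
      · have hx2 : x2 = 0 := sqz x2 (by linarith only [h, sq_nonneg ((4*s-3)*x2), sq_nonneg x3, mul_nonneg (mul_nonneg hs hs) (sq_nonneg x1)])
        have hx3 : x3 = 0 := sqz x3 (by linarith only [h, sq_nonneg ((4*s-3)*x2), sq_nonneg x2, mul_nonneg (mul_nonneg hs hs) (sq_nonneg x1)])
        rw [hx2, hx3]
        linarith only [mul_nonneg (mul_nonneg (mul_nonneg hs hs) (sq_nonneg x1)) (sq_nonneg v2), mul_nonneg (sq_nonneg x1) (sq_nonneg v3), mul_nonneg (mul_nonneg (sq_nonneg (s-1)) (sq_nonneg x1)) (sq_nonneg v1)]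
    · have hx3 : x3 = 0 := sqz x3 (by linarith only [h, sq_nonneg ((4*s-3)*x3), sq_nonneg x1, mul_nonneg (mul_nonneg hs hs) (sq_nonneg x2)])
      have hx1 : x1 = 0 := sqz x1 (by linarith only [h, sq_nonneg ((4*s-3)*x3), sq_nonneg x3, mul_nonneg (mul_nonneg hs hs) (sq_nonneg x2)])
      rw [hx3, hx1]
      linarith only [mul_nonneg (mul_nonneg (mul_nonneg hs hs) (sq_nonneg x2)) (sq_nonneg v3), mul_nonneg (sq_nonneg x2) (sq_nonneg v1), mul_nonneg (mul_nonneg (sq_nonneg (s-1)) (sq_nonneg x2)) (sq_nonneg v2)]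

open Matrix

/-- The map `Φ_t` applied to a `3 × 3` matrix `A`. -/
def Phi (t : ℝ) (A : Matrix (Fin 3) (Fin 3) ℝ) : Matrix (Fin 3) (Fin 3) ℝ :=
  !![(t^2-1)^2 * A 0 0 + A 1 1 + t^4 * A 2 2, -(t^4-t^2+1) * A 0 1, -(t^4-t^2+1) * A 0 2;
     -(t^4-t^2+1) * A 1 0, (t^2-1)^2 * A 1 1 + A 2 2 + t^4 * A 0 0, -(t^4-t^2+1) * A 1 2;
     -(t^4-t^2+1) * A 2 0, -(t^4-t^2+1) * A 2 1, (t^2-1)^2 * A 2 2 + A 0 0 + t^4 * A 1 1]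

/-- For every real `t` and every `x ∈ ℝ³`, the matrix `Φ_t(xxᵀ)` is positive semidefinite. -/
theorem phi_vecMulVec_posSemidef (t : ℝ) (x : Fin 3 → ℝ) :
    (Phi t (vecMulVec x x)).PosSemidef := by
  rw [Matrix.posSemidef_iff_dotProduct_mulVec]
  constructor
  · rw [Matrix.IsHermitian]
    ext i j
    fin_cases i <;> fin_cases j <;>
      simp [Phi, Matrix.vecMulVec_apply, Matrix.conjTranspose_apply, mul_comm]
  · intro v
    have key := Qnn (t^2) (x 0) (x 1) (x 2) (v 0) (v 1) (v 2) (sq_nonneg t)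
    simp only [Phi, Matrix.vecMulVec_apply, Matrix.mulVec, dotProduct,
      Fin.sum_univ_three, Matrix.cons_val', Matrix.cons_val_zero, Matrix.cons_val_one,
      Matrix.head_cons, Matrix.empty_val', Matrix.cons_val_fin_one, Matrix.head_fin_const,
      Matrix.of_apply, Matrix.cons_val_two, Matrix.tail_cons, Pi.star_apply, star_trivial,
      RCLike.star_def, starRingEnd_apply]
    nlinarith [key]
end

section
/- For every real number t, the linear map Φ_t is positive: for every positive semidefinite real symmetric 3×3 matrix A, the matrix Φ_t(A) is positive semidefinite. -/
set_option maxHeartbeats 1000000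

open Matrix

/-- Nonnegativity of a binary quadratic form from its minors. -/
private lemma quad2 (p q r w z : ℝ) (hp : 0 ≤ p) (hq : 0 ≤ q) (h : r^2 ≤ p*q) :
    0 ≤ p*w^2 + 2*r*w*z + q*z^2 := by
  rcases hp.eq_or_lt with h0 | h0
  · have hr : r = 0 := by nlinarith
    subst hr
    rw [← h0]
    nlinarith [mul_nonneg hq (sq_nonneg z)]
  · nlinarith [sq_nonneg (p*w + r*z),
      mul_nonneg (by nlinarith : (0:ℝ) ≤ p*q - r^2) (sq_nonneg z)]

/-- Nonnegativity of a ternary quadratic form from its principal minors. -/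
private lemma quad3 (a b c d e f v1 v2 v3 : ℝ)
    (ha : 0 ≤ a) (hb : 0 ≤ b) (hc : 0 ≤ c)
    (h12 : d^2 ≤ a*b) (h13 : e^2 ≤ a*c) (h23 : f^2 ≤ b*c)
    (hdet : 0 ≤ a*b*c + 2*d*e*f - a*f^2 - b*e^2 - c*d^2) :
    0 ≤ a*v1^2 + b*v2^2 + c*v3^2 + 2*d*v1*v2 + 2*e*v1*v3 + 2*f*v2*v3 := by
  rcases ha.eq_or_lt with h0 | h0
  · have hd : d = 0 := by nlinarith
    have he : e = 0 := by nlinarith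
    have h2 := quad2 b c f v2 v3 hb hc h23
    subst hd; subst he
    rw [← h0]
    nlinarith [h2]
  · have hp : 0 ≤ a*b - d^2 := by linarith
    have hq : 0 ≤ a*c - e^2 := by linarith
    have hr : (a*f - d*e)^2 ≤ (a*b - d^2)*(a*c - e^2) := by
      nlinarith [mul_nonneg h0.le hdet]
    have h2 := quad2 (a*b - d^2) (a*c - e^2) (a*f - d*e) v2 v3 hp hq hr
    nlinarith [sq_nonneg (a*v1 + d*v2 + e*v3), h2, h0]

/-- 2×2 principal minor inequality for the coefficient matrix. -/
private lemma minorAux (t x y z : ℝ) :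
    (-(t^4-t^2+1)*x*y)^2 ≤
      ((t^2-1)^2*x^2 + t^4*y^2 + z^2) * ((t^2-1)^2*y^2 + t^4*z^2 + x^2) := by
  nlinarith [sq_nonneg ((t^2-1)*(x^2 - t^2*y^2)), sq_nonneg ((t^2-1)*t^2*x*z),
    sq_nonneg (t^4*y*z), sq_nonneg ((t^2-1)*y*z), sq_nonneg (t^2*z^2), sq_nonneg (x*z)]

/-- The reduced determinant cubic. -/
private def DD (s a b c : ℝ) : ℝ :=
  s^2*(a^3+b^3+c^3) + (1-2*s^3)*(a^2*b+b^2*c+c^2*a) + (s^4-2*s)*(a*b^2+b*c^2+c*a^2)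
    - 3*(s^4-2*s^3+s^2-2*s+1)*(a*b*c)

private lemma DD_cyc (s a b c : ℝ) : DD s a b c = DD s b c a := by unfold DD; ring

private lemma DD_ord1 (s a b c : ℝ) (hs : 0 ≤ s) (hc : 0 ≤ c) (h1 : b ≤ a) (h2 : c ≤ b) :
    0 ≤ DD s a b c := by
  have hu : 0 ≤ a - b := by linarith
  have hv : 0 ≤ b - c := by linarith
  have e1 : 0 ≤ (s^2-s+1)^2 * c * ((a-b)^2 + (a-b)*(b-c) + (b-c)^2) :=
    mul_nonneg (mul_nonneg (sq_nonneg _) hc)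
      (by nlinarith [sq_nonneg (a-b), sq_nonneg (b-c), mul_nonneg hu hv])
  have e2 : 0 ≤ ((a-b) - (s-1)*(b-c))^2 * (s^2*(a-b) + (s^2+1)*(b-c)) :=
    mul_nonneg (sq_nonneg _)
      (by nlinarith [mul_nonneg (sq_nonneg s) hu, mul_nonneg (sq_nonneg s) hv])
  unfold DD
  nlinarith [e1, e2]

private lemma DD_ord2 (s a b c : ℝ) (hs : 0 ≤ s) (hb : 0 ≤ b) (h1 : c ≤ a) (h2 : b ≤ c) :
    0 ≤ DD s a b c := by
  have hu : 0 ≤ c - b := by linarith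
  have hv : 0 ≤ a - c := by linarith
  have e1 : 0 ≤ (s^2-s+1)^2 * b * ((c-b)^2 + (c-b)*(a-c) + (a-c)^2) :=
    mul_nonneg (mul_nonneg (sq_nonneg _) hb)
      (by nlinarith [sq_nonneg (c-b), sq_nonneg (a-c), mul_nonneg hu hv])
  have e2 : 0 ≤ ((1-s)*(c-b) - s*(a-c))^2 * ((s^2+1)*(c-b) + (a-c)) :=
    mul_nonneg (sq_nonneg _)
      (by nlinarith [mul_nonneg (sq_nonneg s) hu])
  unfold DD
  nlinarith [e1, e2]

private lemma DD_nonneg (s a b c : ℝ) (hs : 0 ≤ s) (ha : 0 ≤ a) (hb : 0 ≤ b) (hc : 0 ≤ c) :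
    0 ≤ DD s a b c := by
  rcases le_total a b with h1 | h1 <;> rcases le_total b c with h2 | h2 <;>
    rcases le_total a c with h3 | h3
  · rw [DD_cyc, DD_cyc]; exact DD_ord2 s c a b hs ha h2 h1
  · rw [DD_cyc]; exact DD_ord2 s b c a hs hc h1 h3
  · rw [DD_cyc]; exact DD_ord1 s b c a hs ha h2 h3
  · rw [DD_cyc]; exact DD_ord2 s b c a hs hc h1 h3
  · rw [DD_cyc, DD_cyc]; exact DD_ord1 s c a b hs hb h3 h1
  · exact DD_ord2 s a b c hs hb h3 h2
  · exact DD_ord1 s a b c hs hc h1 h2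
  · exact DD_ord1 s a b c hs hc h1 h2

/-- The key pointwise inequality: the biquadratic form of `Φ_t` is nonnegative. -/
private lemma key (t x1 x2 x3 v1 v2 v3 : ℝ) :
    0 ≤ ((t^2-1)^2*x1^2 + t^4*x2^2 + x3^2)*v1^2 + ((t^2-1)^2*x2^2 + t^4*x3^2 + x1^2)*v2^2
      + ((t^2-1)^2*x3^2 + t^4*x1^2 + x2^2)*v3^2
      + 2*(-(t^4-t^2+1)*x1*x2)*v1*v2 + 2*(-(t^4-t^2+1)*x1*x3)*v1*v3
      + 2*(-(t^4-t^2+1)*x2*x3)*v2*v3 := by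
  have ha : (0:ℝ) ≤ (t^2-1)^2*x1^2 + t^4*x2^2 + x3^2 := by positivity
  have hb : (0:ℝ) ≤ (t^2-1)^2*x2^2 + t^4*x3^2 + x1^2 := by positivity
  have hc : (0:ℝ) ≤ (t^2-1)^2*x3^2 + t^4*x1^2 + x2^2 := by positivity
  have h12 := minorAux t x1 x2 x3
  have h23 := minorAux t x2 x3 x1
  have h31 := minorAux t x3 x1 x2
  have h12' : (-(t^4-t^2+1)*x1*x2)^2 ≤
      ((t^2-1)^2*x1^2 + t^4*x2^2 + x3^2) * ((t^2-1)^2*x2^2 + t^4*x3^2 + x1^2) := h12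
  have h13' : (-(t^4-t^2+1)*x1*x3)^2 ≤
      ((t^2-1)^2*x1^2 + t^4*x2^2 + x3^2) * ((t^2-1)^2*x3^2 + t^4*x1^2 + x2^2) := by
    nlinarith [h31]
  have h23' : (-(t^4-t^2+1)*x2*x3)^2 ≤
      ((t^2-1)^2*x2^2 + t^4*x3^2 + x1^2) * ((t^2-1)^2*x3^2 + t^4*x1^2 + x2^2) := h23
  have hD : 0 ≤ DD (t^2) (x1^2) (x2^2) (x3^2) :=
    DD_nonneg _ _ _ _ (sq_nonneg t) (sq_nonneg x1) (sq_nonneg x2) (sq_nonneg x3)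
  have hD2 : 0 ≤ (t^2-1)^2 * DD (t^2) (x1^2) (x2^2) (x3^2) :=
    mul_nonneg (sq_nonneg _) hD
  have hdet : 0 ≤ ((t^2-1)^2*x1^2 + t^4*x2^2 + x3^2) * (((t^2-1)^2*x2^2 + t^4*x3^2 + x1^2)
        * ((t^2-1)^2*x3^2 + t^4*x1^2 + x2^2))
      + 2*((-(t^4-t^2+1)*x1*x2)*((-(t^4-t^2+1)*x1*x3)*(-(t^4-t^2+1)*x2*x3)))
      - ((t^2-1)^2*x1^2 + t^4*x2^2 + x3^2)*(-(t^4-t^2+1)*x2*x3)^2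
      - ((t^2-1)^2*x2^2 + t^4*x3^2 + x1^2)*(-(t^4-t^2+1)*x1*x3)^2
      - ((t^2-1)^2*x3^2 + t^4*x1^2 + x2^2)*(-(t^4-t^2+1)*x1*x2)^2 := by
    have hEq : ((t^2-1)^2*x1^2 + t^4*x2^2 + x3^2) * (((t^2-1)^2*x2^2 + t^4*x3^2 + x1^2)
          * ((t^2-1)^2*x3^2 + t^4*x1^2 + x2^2))
        + 2*((-(t^4-t^2+1)*x1*x2)*((-(t^4-t^2+1)*x1*x3)*(-(t^4-t^2+1)*x2*x3)))
        - ((t^2-1)^2*x1^2 + t^4*x2^2 + x3^2)*(-(t^4-t^2+1)*x2*x3)^2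
        - ((t^2-1)^2*x2^2 + t^4*x3^2 + x1^2)*(-(t^4-t^2+1)*x1*x3)^2
        - ((t^2-1)^2*x3^2 + t^4*x1^2 + x2^2)*(-(t^4-t^2+1)*x1*x2)^2
        = (t^2-1)^2 * DD (t^2) (x1^2) (x2^2) (x3^2) := by
      unfold DD; ring
    rw [hEq]; exact hD2
  have := quad3 ((t^2-1)^2*x1^2 + t^4*x2^2 + x3^2) ((t^2-1)^2*x2^2 + t^4*x3^2 + x1^2)
    ((t^2-1)^2*x3^2 + t^4*x1^2 + x2^2) (-(t^4-t^2+1)*x1*x2) (-(t^4-t^2+1)*x1*x3)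
    (-(t^4-t^2+1)*x2*x3) v1 v2 v3 ha hb hc h12' h13' h23' (by nlinarith [hdet])
  linarith [this]

/-- For every real `t`, the map `Φ_t` is positive: it sends every positive semidefinite real
symmetric `3 × 3` matrix to a positive semidefinite matrix. -/
theorem phi_positive (t : ℝ) (A : Matrix (Fin 3) (Fin 3) ℝ) (hA : A.PosSemidef) :
    (Phi t A).PosSemidef := by
  open scoped MatrixOrder in
  obtain ⟨B, hB⟩ := CStarAlgebra.nonneg_iff_eq_star_mul_self.mp hA.nonneg
  rw [star_eq_conjTranspose, conjTranspose_eq_transpose_of_trivial] at hB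
  subst hB
  have hsym : ∀ i j : Fin 3, (Bᵀ * B) i j = (Bᵀ * B) j i := by
    intro i j
    simp only [Matrix.mul_apply, Matrix.transpose_apply]
    exact Finset.sum_congr rfl fun k _ => mul_comm _ _
  rw [Matrix.posSemidef_iff_dotProduct_mulVec]
  constructor
  · ext i j
    fin_cases i <;> fin_cases j <;> simp [Phi] <;>
      first
        | rfl
        | exact Or.inl (hsym _ _)
  · intro x
    have k0 := key t (x 0) (x 1) (x 2) (B 0 0) (B 0 1) (B 0 2)
    have k1 := key t (x 0) (x 1) (x 2) (B 1 0) (B 1 1) (B 1 2)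
    have k2 := key t (x 0) (x 1) (x 2) (B 2 0) (B 2 1) (B 2 2)
    simp only [Phi, dotProduct, Matrix.mulVec, Matrix.mul_apply,
      Matrix.conjTranspose_apply, Fin.sum_univ_three, star_trivial, Pi.star_apply,
      Matrix.cons_val', Matrix.cons_val_zero, Matrix.cons_val_one, Matrix.head_cons,
      Matrix.cons_val_two, Matrix.tail_cons, Matrix.empty_val', Matrix.cons_val_fin_one,
      Matrix.head_fin_const, Matrix.of_apply, Matrix.transpose_apply]
    linarith [k0, k1, k2]
end

section
/- For every real number t and every x = (x₁,x₂,x₃) ∈ ℝ³, the determinant of the matrix Φ_t(xxᵀ) equals (t²−1)²·( t⁴(x₁⁶+x₂⁶+x₃⁶) + (t⁸−2t²)(x₁⁴x₂²+x₂⁴x₃²+x₃⁴x₁²) + (1−2t⁶)(x₁²x₂⁴+x₂²x₃⁴+x₃²x₁⁴) − 3(t⁸−2t⁶+t⁴−2t²+1)x₁²x₂²x₃² ). -/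
open Matrix

set_option maxHeartbeats 2000000 in
/-- The determinant of `Φ_t(xxᵀ)` equals `(t²-1)²` times the generalized Robinson
polynomial `S_t`. -/
theorem det_phi_vecMulVec (t : ℝ) (x : Fin 3 → ℝ) :
    (Phi t (vecMulVec x x)).det =
      (t^2-1)^2 * (t^4 * (x 0^6 + x 1^6 + x 2^6)
        + (t^8 - 2*t^2) * (x 0^4 * x 1^2 + x 1^4 * x 2^2 + x 2^4 * x 0^2)
        + (1 - 2*t^6) * (x 0^2 * x 1^4 + x 1^2 * x 2^4 + x 2^2 * x 0^4)
        - 3 * (t^8 - 2*t^6 + t^4 - 2*t^2 + 1) * x 0^2 * x 1^2 * x 2^2) := by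
  rw [det_fin_three]
  simp only [Phi, vecMulVec_apply, of_apply, cons_val', cons_val_zero, cons_val_one,
    cons_val_two, head_cons, tail_cons, empty_val', cons_val_fin_one, head_fin_const]
  ring
end

section
/- Let t ∈ ℝ with t ∉ {−1,0,1}. For a nonzero vector x ∈ ℝ³, the determinant of Φ_t(xxᵀ) equals zero if and only if x is a nonzero scalar multiple of one of the ten vectors (1,1,1), (1,1,−1), (1,−1,1), (−1,1,1), (1,t,0), (1,−t,0), (0,1,t), (0,1,−t), (t,0,1), (−t,0,1). -/
open Matrix

private lemma squeeze (K X Y Z W P Q : ℝ) (hK : 0 < K)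
    (h : K*(X^2+Y^2+Z^2) + W^2 + P^2 + Q^2 = 0) :
    X = 0 ∧ Y = 0 ∧ Z = 0 ∧ P = 0 ∧ Q = 0 := by
  have hX2 : X^2 ≤ 0 := by nlinarith [sq_nonneg Y, sq_nonneg Z, sq_nonneg W, sq_nonneg P, sq_nonneg Q, sq_nonneg X]
  have hY2 : Y^2 ≤ 0 := by nlinarith [sq_nonneg X, sq_nonneg Z, sq_nonneg W, sq_nonneg P, sq_nonneg Q, sq_nonneg Y]
  have hZ2 : Z^2 ≤ 0 := by nlinarith [sq_nonneg X, sq_nonneg Y, sq_nonneg W, sq_nonneg P, sq_nonneg Q, sq_nonneg Z]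
  have hP2 : P^2 ≤ 0 := by nlinarith [sq_nonneg X, sq_nonneg Y, sq_nonneg Z, sq_nonneg W, sq_nonneg Q, mul_nonneg hK.le (sq_nonneg X), mul_nonneg hK.le (sq_nonneg Y), mul_nonneg hK.le (sq_nonneg Z)]
  have hQ2 : Q^2 ≤ 0 := by nlinarith [sq_nonneg X, sq_nonneg Y, sq_nonneg Z, sq_nonneg W, sq_nonneg P, mul_nonneg hK.le (sq_nonneg X), mul_nonneg hK.le (sq_nonneg Y), mul_nonneg hK.le (sq_nonneg Z)]
  refine ⟨?_, ?_, ?_, ?_, ?_⟩ <;>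
    [skip; skip; skip; skip; skip]
  · exact pow_eq_zero_iff (two_ne_zero) |>.mp (le_antisymm hX2 (sq_nonneg X))
  · exact pow_eq_zero_iff (two_ne_zero) |>.mp (le_antisymm hY2 (sq_nonneg Y))
  · exact pow_eq_zero_iff (two_ne_zero) |>.mp (le_antisymm hZ2 (sq_nonneg Z))
  · exact pow_eq_zero_iff (two_ne_zero) |>.mp (le_antisymm hP2 (sq_nonneg P))
  · exact pow_eq_zero_iff (two_ne_zero) |>.mp (le_antisymm hQ2 (sq_nonneg Q))

private lemma sq_pos_of_ne' {r : ℝ} (h : r ≠ 0) : 0 < r^2 :=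
  lt_of_le_of_ne (sq_nonneg r) (Ne.symm (pow_ne_zero 2 h))

private lemma smul3 (k a b c : ℝ) : k • ![a, b, c] = ![k*a, k*b, k*c] := by
  funext i; fin_cases i <;> simp

private lemma core_s11 (t a b c : ℝ) (ht0 : t ≠ 0) (hs : 0 < t^4 - t^2 + 1)
    (h0 : ¬(a = 0 ∧ b = 0 ∧ c = 0))
    (hsum : 2*(t^4-t^2+1)*((a*b*(b^2 - t^2*a^2 + (t^2-1)*c^2))^2 + (b*c*(c^2 - t^2*b^2 + (t^2-1)*a^2))^2 + (c*a*(a^2 - t^2*c^2 + (t^2-1)*b^2))^2) + ((t^2*a^4 - t^2*c^4 - a^2*b^2 + t^4*b^2*c^2 + (1-t^4)*a^2*c^2) - (t^2*b^4 - t^2*c^4 - t^4*a^2*b^2 + (t^4-1)*b^2*c^2 + a^2*c^2))^2 + (t^2*a^4 - t^2*c^4 - a^2*b^2 + t^4*b^2*c^2 + (1-t^4)*a^2*c^2)^2 + (t^2*b^4 - t^2*c^4 - t^4*a^2*b^2 + (t^4-1)*b^2*c^2 + a^2*c^2)^2 = 0) :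
    ∃ k : ℝ, k ≠ 0 ∧ ∃ u ∈ [![(1:ℝ), 1, 1], ![1, 1, -1], ![1, -1, 1], ![-1, 1, 1], ![1, t, 0], ![1, -t, 0], ![0, 1, t], ![0, 1, -t], ![t, 0, 1], ![-t, 0, 1]],
      ![a, b, c] = k • u := by
  have hK : (0:ℝ) < 2*(t^4-t^2+1) := by linarith
  obtain ⟨hX, hY, hZ, hP1, hP2⟩ := squeeze _ _ _ _ _ _ _ hK hsum
  have ht2pos : 0 < t^2 := sq_pos_of_ne' ht0
  by_cases ha : a = 0
  · subst ha
    by_cases hc : c = 0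
    · exfalso
      subst hc
      apply h0
      refine ⟨rfl, ?_, rfl⟩
      have h4 : t^2 * b^4 = 0 := by linear_combination hP2
      rcases mul_eq_zero.mp h4 with h | h
      · exact absurd h (by positivity)
      · exact pow_eq_zero_iff (by norm_num : (4:ℕ) ≠ 0) |>.mp h
    · have h1 : t^2*c^2*(c^2 - t^2*b^2) = 0 := by linear_combination -hP1
      have h2 : c^2 - t^2*b^2 = 0 := by
        rcases mul_eq_zero.mp h1 with h | h
        · exact absurd h (by
            have := sq_pos_of_ne' hc
            positivity)
        · exact h
      have hb : b ≠ 0 := by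
        intro hb0
        subst hb0
        apply hc
        have : c^2 = 0 := by linear_combination h2
        exact pow_eq_zero_iff two_ne_zero |>.mp this
      have h3 : (c - t*b)*(c + t*b) = 0 := by linear_combination h2
      rcases mul_eq_zero.mp h3 with h4 | h4
      · refine ⟨b, hb, ![0, 1, t], by simp, ?_⟩
        have hc' : c = t*b := by linarith
        funext i; fin_cases i <;> simp [hc'] <;> ring
      · refine ⟨b, hb, ![0, 1, -t], by simp, ?_⟩
        have hc' : c = -(t*b) := by linarith
        funext i; fin_cases i <;> simp [hc'] <;> ring
  · by_cases hb : b = 0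
    · subst hb
      have h1 : (a^2 - t^2*c^2)*(t^2*a^2 + c^2) = 0 := by linear_combination hP1
      have h2 : a^2 - t^2*c^2 = 0 := by
        rcases mul_eq_zero.mp h1 with h | h
        · exact h
        · exact absurd h (by
            have := sq_pos_of_ne' ha
            positivity)
      have hc : c ≠ 0 := by
        intro hc0
        subst hc0
        apply ha
        have : a^2 = 0 := by linear_combination h2
        exact pow_eq_zero_iff two_ne_zero |>.mp this
      have h3 : (a - t*c)*(a + t*c) = 0 := by linear_combination h2
      rcases mul_eq_zero.mp h3 with h4 | h4
      · refine ⟨c, hc, ![t, 0, 1], by simp, ?_⟩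
        have ha' : a = t*c := by linarith
        funext i; fin_cases i <;> simp [ha'] <;> ring
      · refine ⟨c, hc, ![-t, 0, 1], by simp, ?_⟩
        have ha' : a = -(t*c) := by linarith
        funext i; fin_cases i <;> simp [ha'] <;> ring
    · by_cases hc : c = 0
      · subst hc
        have h1 : a^2*(t^2*a^2 - b^2) = 0 := by linear_combination hP1
        have h2 : t^2*a^2 - b^2 = 0 := by
          rcases mul_eq_zero.mp h1 with h | h
          · exact absurd h (pow_ne_zero 2 ha)
          · exact h
        have h3 : (b - t*a)*(b + t*a) = 0 := by linear_combination -h2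
        rcases mul_eq_zero.mp h3 with h4 | h4
        · refine ⟨a, ha, ![1, t, 0], by simp, ?_⟩
          have hb' : b = t*a := by linarith
          funext i; fin_cases i <;> simp [hb'] <;> ring
        · refine ⟨a, ha, ![1, -t, 0], by simp, ?_⟩
          have hb' : b = -(t*a) := by linarith
          funext i; fin_cases i <;> simp [hb'] <;> ring
      · -- interior case : a, b, c all nonzero
        have hl1 : b^2 - t^2*a^2 + (t^2-1)*c^2 = 0 := by
          rcases mul_eq_zero.mp hX with h | h
          · exact absurd h (mul_ne_zero ha hb)
          · exact h
        have hl2 : c^2 - t^2*b^2 + (t^2-1)*a^2 = 0 := by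
          rcases mul_eq_zero.mp hY with h | h
          · exact absurd h (mul_ne_zero hb hc)
          · exact h
        have h1 : (t^4-t^2+1)*(c^2-a^2) = 0 := by linear_combination hl2 + t^2*hl1
        have hca : c^2 - a^2 = 0 := by
          rcases mul_eq_zero.mp h1 with h | h
          · exact absurd h (ne_of_gt hs)
          · exact h
        have hba : b^2 - a^2 = 0 := by linear_combination hl1 - (t^2-1)*hca
        have hbb : (b - a)*(b + a) = 0 := by linear_combination hba
        have hcc : (c - a)*(c + a) = 0 := by linear_combination hca
        rcases mul_eq_zero.mp hbb with h4 | h4 <;> rcases mul_eq_zero.mp hcc with h5 | h5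
        · refine ⟨a, ha, ![1, 1, 1], by simp, ?_⟩
          have hb' : b = a := by linarith
          have hc' : c = a := by linarith
          funext i; fin_cases i <;> simp [hb', hc']
        · refine ⟨a, ha, ![1, 1, -1], by simp, ?_⟩
          have hb' : b = a := by linarith
          have hc' : c = -a := by linarith
          funext i; fin_cases i <;> simp [hb', hc']
        · refine ⟨a, ha, ![1, -1, 1], by simp, ?_⟩
          have hb' : b = -a := by linarith
          have hc' : c = a := by linarith
          funext i; fin_cases i <;> simp [hb', hc']
        · refine ⟨-a, neg_ne_zero.mpr ha, ![-1, 1, 1], by simp, ?_⟩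
          have hb' : b = -a := by linarith
          have hc' : c = -a := by linarith
          funext i; fin_cases i <;> simp [hb', hc']

set_option maxHeartbeats 2000000 in
/-- For `t ∉ {-1, 0, 1}` and nonzero `x ∈ ℝ³`, `det Φ_t(xxᵀ) = 0` iff `x` is a nonzero
scalar multiple of one of ten specific vectors. -/
theorem det_phi_eq_zero_iff (t : ℝ) (ht : t ∉ ({-1, 0, 1} : Set ℝ))
    (x : Fin 3 → ℝ) (hx : x ≠ 0) :
    (Phi t (vecMulVec x x)).det = 0 ↔
      ∃ c : ℝ, c ≠ 0 ∧ ∃ u ∈ [![(1:ℝ), 1, 1], ![1, 1, -1], ![1, -1, 1], ![-1, 1, 1],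
        ![1, t, 0], ![1, -t, 0], ![0, 1, t], ![0, 1, -t], ![t, 0, 1], ![-t, 0, 1]],
        x = c • u := by
  simp only [Set.mem_insert_iff, Set.mem_singleton_iff, not_or] at ht
  obtain ⟨htm1, ht0, htp1⟩ := ht
  have ht2pos : 0 < t^2 := lt_of_le_of_ne (sq_nonneg t) (Ne.symm (pow_ne_zero 2 ht0))
  have hs : 0 < t^4 - t^2 + 1 := by nlinarith [sq_nonneg (t^2 - 1)]
  have ht2 : t^2 - 1 ≠ 0 := by
    intro h
    have h' : (t - 1)*(t + 1) = 0 := by linear_combination h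
    rcases mul_eq_zero.mp h' with h'' | h''
    · exact htp1 (by linarith)
    · exact htm1 (by linarith)
  constructor
  · intro hdet
    have key : 2*((x 0)^2+(x 1)^2+(x 2)^2) * (Phi t (vecMulVec x x)).det
        = (t^2-1)^2 * (2*(t^4-t^2+1)*(((x 0)*(x 1)*((x 1)^2 - t^2*(x 0)^2 + (t^2-1)*(x 2)^2))^2 + ((x 1)*(x 2)*((x 2)^2 - t^2*(x 1)^2 + (t^2-1)*(x 0)^2))^2 + ((x 2)*(x 0)*((x 0)^2 - t^2*(x 2)^2 + (t^2-1)*(x 1)^2))^2) + ((t^2*(x 0)^4 - t^2*(x 2)^4 - (x 0)^2*(x 1)^2 + t^4*(x 1)^2*(x 2)^2 + (1-t^4)*(x 0)^2*(x 2)^2) - (t^2*(x 1)^4 - t^2*(x 2)^4 - t^4*(x 0)^2*(x 1)^2 + (t^4-1)*(x 1)^2*(x 2)^2 + (x 0)^2*(x 2)^2))^2 + (t^2*(x 0)^4 - t^2*(x 2)^4 - (x 0)^2*(x 1)^2 + t^4*(x 1)^2*(x 2)^2 + (1-t^4)*(x 0)^2*(x 2)^2)^2 + (t^2*(x 1)^4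 - t^2*(x 2)^4 - t^4*(x 0)^2*(x 1)^2 + (t^4-1)*(x 1)^2*(x 2)^2 + (x 0)^2*(x 2)^2)^2) := by
      simp [Phi, Matrix.det_fin_three, Matrix.vecMulVec_apply]
      ring
    have hz : (t^2-1)^2 * (2*(t^4-t^2+1)*(((x 0)*(x 1)*((x 1)^2 - t^2*(x 0)^2 + (t^2-1)*(x 2)^2))^2 + ((x 1)*(x 2)*((x 2)^2 - t^2*(x 1)^2 + (t^2-1)*(x 0)^2))^2 + ((x 2)*(x 0)*((x 0)^2 - t^2*(x 2)^2 + (t^2-1)*(x 1)^2))^2) + ((t^2*(x 0)^4 - t^2*(x 2)^4 - (x 0)^2*(x 1)^2 + t^4*(x 1)^2*(x 2)^2 + (1-t^4)*(x 0)^2*(x 2)^2) - (t^2*(x 1)^4 - t^2*(x 2)^4 - t^4*(x 0)^2*(x 1)^2 + (t^4-1)*(x 1)^2*(x 2)^2 + (x 0)^2*(x 2)^2))^2 + (t^2*(x 0)^4 - t^2*(x 2)^4 - (x 0)^2*(x 1)^2 + t^4*(x 1)^2*(x 2)^2 + (1-t^4)*(x 0)^2*(x 2)^2)^2 + (t^2*(x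 1)^4 - t^2*(x 2)^4 - t^4*(x 0)^2*(x 1)^2 + (t^4-1)*(x 1)^2*(x 2)^2 + (x 0)^2*(x 2)^2)^2) = 0 := by rw [← key, hdet, mul_zero]
    have hSUM : 2*(t^4-t^2+1)*(((x 0)*(x 1)*((x 1)^2 - t^2*(x 0)^2 + (t^2-1)*(x 2)^2))^2 + ((x 1)*(x 2)*((x 2)^2 - t^2*(x 1)^2 + (t^2-1)*(x 0)^2))^2 + ((x 2)*(x 0)*((x 0)^2 - t^2*(x 2)^2 + (t^2-1)*(x 1)^2))^2) + ((t^2*(x 0)^4 - t^2*(x 2)^4 - (x 0)^2*(x 1)^2 + t^4*(x 1)^2*(x 2)^2 + (1-t^4)*(x 0)^2*(x 2)^2) - (t^2*(x 1)^4 - t^2*(x 2)^4 - t^4*(x 0)^2*(x 1)^2 + (t^4-1)*(x 1)^2*(x 2)^2 + (x 0)^2*(x 2)^2))^2 + (t^2*(x 0)^4 - t^2*(x 2)^4 - (x 0)^2*(x 1)^2 + t^4*(x 1)^2*(x 2)^2 + (1-t^4)*(x 0)^2*(x 2)^2)^2 + (t^2*(x 1)^4 - t^2*(x 2)^4 - t^4*(x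 0)^2*(x 1)^2 + (t^4-1)*(x 1)^2*(x 2)^2 + (x 0)^2*(x 2)^2)^2 = 0 := by
      rcases mul_eq_zero.mp hz with h | h
      · exact absurd h (pow_ne_zero 2 ht2)
      · exact h
    have h0 : ¬(x 0 = 0 ∧ x 1 = 0 ∧ x 2 = 0) := by
      rintro ⟨h1, h2, h3⟩
      apply hx
      funext i
      fin_cases i <;> assumption
    obtain ⟨k, hk, u, hu, he⟩ := core_s11 t (x 0) (x 1) (x 2) ht0 hs h0 hSUM
    refine ⟨k, hk, u, hu, ?_⟩
    have hxv : x = ![x 0, x 1, x 2] := by funext i; fin_cases i <;> rfl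
    rw [hxv]; exact he
  · rintro ⟨k, hk, u, hu, rfl⟩
    simp only [List.mem_cons, List.not_mem_nil, or_false] at hu
    rcases hu with rfl | rfl | rfl | rfl | rfl | rfl | rfl | rfl | rfl | rfl <;>
      · simp only [smul3]
        rw [Matrix.det_fin_three]
        simp only [Phi, Matrix.vecMulVec_apply, Matrix.cons_val_zero, Matrix.cons_val_one,
          Matrix.head_cons, Matrix.cons_val_two, Matrix.tail_cons, Matrix.of_apply,
          Matrix.cons_val']
        ring
end
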